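/- arXiv:0906.5405 — 5 statements merged into one kernel-verified Lean document; each statement's English description precedes it below -/
import Mathlib

section
/- Let ω > 0, let G be an m×m complex matrix, V an m×m diagonal complex matrix, and U^i ∈ ℂ^m a vector each of whose components has modulus 1. If ω²‖GV‖ < 1/2, then I − ω²GV is invertible and every component u_j of the vector U := (I − ω²GV)⁻¹U^i satisfies |u_j| ≥ b₀, where b₀ := (1 − 2ω²‖GV‖)/(1 − ω²‖GV‖); equivalently, the entrywise reciprocal vector U⁻¹ satisfies ‖U⁻¹‖_∞ ≤ (1 − ω²‖GV‖)/(1 − 2ω²‖GV‖). -/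
/-- The maximum-absolute-row-sum norm of a complex matrix (the operator norm
induced by the `ℓ∞` vector norm). -/
noncomputable def rowSumNorm {m : ℕ} (M : Matrix (Fin m) (Fin m) ℂ) : ℝ :=
  ⨆ i, ∑ j, ‖M i j‖

/-- The `ℓ∞` norm of a complex vector. -/
noncomputable def supNorm {m : ℕ} (W : Fin m → ℂ) : ℝ :=
  ⨆ j, ‖W j‖

attribute [local instance] Matrix.linftyOpNormedRing Matrix.linftyOpNormedSpace

open Matrix

lemma rowSum_eq {m : ℕ} (M : Matrix (Fin m) (Fin m) ℂ) :
    rowSumNorm M = ‖M‖ := by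
  rcases Nat.eq_zero_or_pos m with hm | hm
  · subst hm
    simp [rowSumNorm, Matrix.linfty_opNorm_def]
  have : Nonempty (Fin m) := ⟨⟨0, hm⟩⟩
  apply le_antisymm
  · refine ciSup_le fun i => ?_
    rw [Matrix.linfty_opNorm_def]
    have := Finset.le_sup (f := fun i : Fin m => ∑ j, ‖M i j‖₊) (Finset.mem_univ i)
    calc ∑ j, ‖M i j‖ = ((∑ j, ‖M i j‖₊ : NNReal) : ℝ) := by
          push_cast; rfl
      _ ≤ _ := by exact_mod_cast this
  · rw [Matrix.linfty_opNorm_def]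
    have h0 : 0 ≤ rowSumNorm M := by
      refine le_ciSup_of_le (Set.Finite.bddAbove (Set.finite_range _)) (Classical.arbitrary _) ?_
      positivity
    have key : (Finset.univ.sup fun i : Fin m => ∑ j, ‖M i j‖₊) ≤ (⟨rowSumNorm M, h0⟩ : NNReal) := by
      refine Finset.sup_le fun i _ => ?_
      refine NNReal.coe_le_coe.mp ?_
      calc ((∑ j, ‖M i j‖₊ : NNReal) : ℝ) = ∑ j, ‖M i j‖ := by push_cast; rfl
        _ ≤ rowSumNorm M :=
            le_ciSup (f := fun i => ∑ j, ‖M i j‖)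
              (Set.Finite.bddAbove (Set.finite_range _)) i
    exact NNReal.coe_le_coe.mpr key


/-- If `ω²‖GV‖ < 1/2` and `Uⁱ` has unit-modulus entries, then
`I − ω²GV` is invertible and every component of `U = (I − ω²GV)⁻¹Uⁱ` has modulus
at least `b₀ = (1 − 2ω²‖GV‖)/(1 − ω²‖GV‖)`; equivalently
`‖U⁻¹‖_∞ ≤ (1 − ω²‖GV‖)/(1 − 2ω²‖GV‖)`. -/
theorem stmt_3 (m : ℕ) (hm : 1 ≤ m) (ω : ℝ) (hω : 0 < ω)
    (G : Matrix (Fin m) (Fin m) ℂ) (v : Fin m → ℂ) (Ui : Fin m → ℂ)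
    (hUi : ∀ j, ‖Ui j‖ = 1)
    (h : ω ^ 2 * rowSumNorm (G * Matrix.diagonal v) < 1 / 2)
    (U : Fin m → ℂ)
    (hU : U = ((1 - (ω ^ 2 : ℂ) • (G * Matrix.diagonal v))⁻¹).mulVec Ui) :
    IsUnit (1 - (ω ^ 2 : ℂ) • (G * Matrix.diagonal v)) ∧
    (∀ j, (1 - 2 * (ω ^ 2 * rowSumNorm (G * Matrix.diagonal v))) /
        (1 - ω ^ 2 * rowSumNorm (G * Matrix.diagonal v)) ≤ ‖U j‖) ∧
    supNorm (fun j => (U j)⁻¹) ≤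
      (1 - ω ^ 2 * rowSumNorm (G * Matrix.diagonal v)) /
        (1 - 2 * (ω ^ 2 * rowSumNorm (G * Matrix.diagonal v))) := by
  have : Nonempty (Fin m) := ⟨⟨0, hm⟩⟩
  haveI : CompleteSpace (Matrix (Fin m) (Fin m) ℂ) := FiniteDimensional.complete ℂ _
  set M := G * Matrix.diagonal v with hM
  set A : Matrix (Fin m) (Fin m) ℂ := (ω ^ 2 : ℂ) • M with hA
  set t : ℝ := ω ^ 2 * rowSumNorm M with htdef
  have ht0 : 0 ≤ t := by
    rw [htdef, rowSum_eq]; positivity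
  have ht : t < 1/2 := h
  have hAnorm : ‖A‖ = t := by
    rw [hA, norm_smul, htdef, rowSum_eq]
    simp [sq_abs, abs_of_pos hω]
  have hA1 : ‖A‖ < 1 := by rw [hAnorm]; linarith
  have hUnit : IsUnit (1 - A) := ⟨Units.oneSub A hA1, rfl⟩
  have hmul : (1 - A) * (1 - A)⁻¹ = 1 :=
    Matrix.mul_nonsing_inv _ ((Matrix.isUnit_iff_isUnit_det _).mp hUnit)
  have hvec : (1 - A) *ᵥ U = Ui := by
    rw [hU, Matrix.mulVec_mulVec, hmul, Matrix.one_mulVec]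
  have hcomp : ∀ j, U j - (A *ᵥ U) j = Ui j := by
    intro j
    have := congrFun hvec j
    rwa [Matrix.sub_mulVec, Matrix.one_mulVec, Pi.sub_apply] at this
  have hUinorm : ‖Ui‖ ≤ 1 := by
    refine (pi_norm_le_iff_of_nonneg zero_le_one).mpr fun j => le_of_eq ?_
    exact hUi j
  have hAU : ∀ j, ‖(A *ᵥ U) j‖ ≤ t * ‖U‖ := by
    intro j
    calc ‖(A *ᵥ U) j‖ = ‖(A *ᵥ U) j‖ := rfl
      _ ≤ ‖A *ᵥ U‖ := norm_le_pi_norm _ j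
      _ ≤ ‖A‖ * ‖U‖ := Matrix.linfty_opNorm_mulVec _ _
      _ = t * ‖U‖ := by rw [hAnorm]
  have hUle : ‖U‖ ≤ 1 / (1 - t) := by
    have h1 : ‖U‖ ≤ ‖Ui‖ + ‖A‖ * ‖U‖ := by
      calc ‖U‖ = ‖Ui + A *ᵥ U‖ := by
            congr 1; ext j; simp only [Pi.add_apply]; rw [← hcomp j]; ring
        _ ≤ ‖Ui‖ + ‖A *ᵥ U‖ := norm_add_le _ _
        _ ≤ ‖Ui‖ + ‖A‖ * ‖U‖ := by linarith [Matrix.linfty_opNorm_mulVec A U]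
    rw [hAnorm] at h1
    rw [le_div_iff₀ (by linarith)]
    nlinarith
  have hb : ∀ j, (1 - 2*t)/(1 - t) ≤ ‖U j‖ := by
    intro j
    have h1 : ‖Ui j‖ ≤ ‖U j‖ + ‖(A *ᵥ U) j‖ := by
      rw [← hcomp j]
      simpa using norm_sub_le (U j) ((A *ᵥ U) j)
    have h2 : t * ‖U‖ ≤ t * (1/(1-t)) := mul_le_mul_of_nonneg_left hUle ht0
    have hne : (1:ℝ) - t ≠ 0 := by linarith
    have heq : (1 - 2*t)/(1-t) = 1 - t * (1/(1-t)) := by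
      rw [mul_one_div, div_eq_iff hne, sub_mul, div_mul_cancel₀ _ hne]
      ring
    rw [heq]
    have := hUi j
    linarith [hAU j]
  refine ⟨hUnit, fun j => hb j, ?_⟩
  have hb0 : 0 < (1 - 2*t)/(1-t) := by
    apply div_pos <;> linarith
  refine ciSup_le fun j => ?_
  rw [norm_inv]
  calc (‖U j‖)⁻¹ ≤ ((1 - 2*t)/(1-t))⁻¹ := inv_anti₀ hb0 (hb j)
    _ = (1-t)/(1-2*t) := by rw [inv_div]
end

section
/- Let ω > 0, ε > 0, and set c := 3 + √(3/2). Let G be an m×m complex matrix, V = diag(ν₁,…,ν_m) an m×m diagonal complex matrix not identically zero, and U^i ∈ ℂ^m a vector each of whose components has modulus 1. Assume ω²‖GV‖ < 1/2 and set b₀ := (1 − 2ω²‖GV‖)/(1 − ω²‖GV‖) and X := V(I − ω²GV)⁻¹U^i. Then every j with ν_j ≠ 0 satisfies |X_j| ≥ b₀/‖V⁻¹‖, where ‖V⁻¹‖ := max{|ν_j|⁻¹ : ν_j ≠ 0}. Consequently, if X̂ ∈ ℂ^m is any vector with ‖X̂ − X‖_∞ ≤ cε and {j : X̂_j ≠ 0}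 ⊆ {j : X_j ≠ 0}, and if b₀ > cε‖V⁻¹‖, then {j : X̂_j ≠ 0} = {j : X_j ≠ 0}. -/
/-- `‖V⁻¹‖ = max {|νⱼ|⁻¹ : νⱼ ≠ 0}` for `V = diag(ν₁,…,ν_m)`. -/
noncomputable def diagInvNorm {m : ℕ} (v : Fin m → ℂ) : ℝ :=
  sSup ((fun j => ‖v j‖⁻¹) '' {j | v j ≠ 0})

theorem rowSumNorm_row_le {m : ℕ} (M : Matrix (Fin m) (Fin m) ℂ) (i : Fin m) :
    ∑ j, ‖M i j‖ ≤ rowSumNorm M := by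
  have := le_ciSup (f := fun i => ∑ j, ‖M i j‖)
    (Set.Finite.bddAbove (Set.finite_range _)) i
  simpa [rowSumNorm] using this

theorem supNorm_comp_le {m : ℕ} [NeZero m] (W : Fin m → ℂ) (j : Fin m) :
    ‖W j‖ ≤ supNorm W := by
  have := le_ciSup (f := fun j => ‖W j‖)
    (Set.Finite.bddAbove (Set.finite_range _)) j
  simpa [supNorm] using this

/-- With `ω²‖GV‖ < 1/2`, `b₀ = (1−2ω²‖GV‖)/(1−ω²‖GV‖)` and
`X = V(I−ω²GV)⁻¹Uⁱ`: every `j` in the support of `ν` satisfies `|Xⱼ| ≥ b₀/‖V⁻¹‖`;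
consequently, any `X̂` with `‖X̂ − X‖_∞ ≤ (3+√(3/2))ε` and `supp X̂ ⊆ supp X`
satisfies `supp X̂ = supp X` provided `b₀ > (3+√(3/2))ε‖V⁻¹‖`. -/
theorem stmt_6 (m : ℕ) (hm : 1 ≤ m) (ω ε : ℝ) (hω : 0 < ω) (hε : 0 < ε)
    (c : ℝ) (hc : c = 3 + Real.sqrt (3 / 2))
    (G : Matrix (Fin m) (Fin m) ℂ) (v : Fin m → ℂ) (hv : ∃ j, v j ≠ 0)
    (Ui : Fin m → ℂ) (hUi : ∀ j, ‖Ui j‖ = 1)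
    (h : ω ^ 2 * rowSumNorm (G * Matrix.diagonal v) < 1 / 2)
    (b₀ : ℝ)
    (hb₀ : b₀ = (1 - 2 * (ω ^ 2 * rowSumNorm (G * Matrix.diagonal v))) /
      (1 - ω ^ 2 * rowSumNorm (G * Matrix.diagonal v)))
    (X : Fin m → ℂ)
    (hX : X = (Matrix.diagonal v).mulVec
      (((1 - (ω ^ 2 : ℂ) • (G * Matrix.diagonal v))⁻¹).mulVec Ui)) :
    (∀ j, v j ≠ 0 → b₀ / diagInvNorm v ≤ ‖X j‖) ∧
    ∀ Xh : Fin m → ℂ, supNorm (Xh - X) ≤ c * ε →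
      {j | Xh j ≠ 0} ⊆ {j | X j ≠ 0} → b₀ > c * ε * diagInvNorm v →
      {j | Xh j ≠ 0} = {j | X j ≠ 0} := by
  have : NeZero m := ⟨by omega⟩
  set A := G * Matrix.diagonal v with hA
  set a := ω ^ 2 * rowSumNorm A with ha
  have hω2 : (0:ℝ) < ω ^ 2 := by positivity
  -- each row sum bound
  have hrow : ∀ k, ω ^ 2 * ∑ j, ‖A k j‖ ≤ a := fun k =>
    mul_le_mul_of_nonneg_left (rowSumNorm_row_le A k) hω2.le
  have ha0 : 0 ≤ a := le_trans (by positivity) (hrow ⟨0, by omega⟩)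
  have ha1 : a < 1 := lt_trans h (by norm_num)
  have h1a : 0 < 1 - a := by linarith
  have hb0pos : 0 < b₀ := by
    rw [hb₀]; exact div_pos (by linarith) h1a
  -- the matrix B
  set B := (1 : Matrix (Fin m) (Fin m) ℂ) - (ω ^ 2 : ℂ) • A with hB
  have hBdet : B.det ≠ 0 := by
    apply det_ne_zero_of_sum_row_lt_diag
    intro k
    have hdiag : B k k = 1 - (ω ^ 2 : ℂ) * A k k := by
      show (1 : Matrix (Fin m) (Fin m) ℂ) k k - ((ω ^ 2 : ℂ) • A) k k = _
      rw [Matrix.one_apply_eq, Matrix.smul_apply, smul_eq_mul]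
    have hoff : ∀ j, j ≠ k → ‖B k j‖ = ω ^ 2 * ‖A k j‖ := by
      intro j hj
      show ‖(1 : Matrix (Fin m) (Fin m) ℂ) k j - ((ω ^ 2 : ℂ) • A) k j‖ = _
      rw [Matrix.one_apply_ne (Ne.symm hj), Matrix.smul_apply, smul_eq_mul, zero_sub,
        norm_neg, norm_mul, norm_pow]
      rw [Complex.norm_real, Real.norm_eq_abs, abs_of_pos hω]
    have h1 : ∑ j ∈ Finset.univ.erase k, ‖B k j‖
        = ∑ j ∈ Finset.univ.erase k, ω ^ 2 * ‖A k j‖ := by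
      refine Finset.sum_congr rfl fun j hj => hoff j (Finset.mem_erase.1 hj).1
    have h2 : ∑ j ∈ Finset.univ.erase k, ω ^ 2 * ‖A k j‖
        = (∑ j, ω ^ 2 * ‖A k j‖) - ω ^ 2 * ‖A k k‖ := by
      rw [Finset.sum_erase_eq_sub (Finset.mem_univ k)]
    have h3 : (∑ j, ω ^ 2 * ‖A k j‖) ≤ a := by
      rw [← Finset.mul_sum]; exact hrow k
    have h4 : (1:ℝ) - ω ^ 2 * ‖A k k‖ ≤ ‖B k k‖ := by
      rw [hdiag]
      calc (1:ℝ) - ω ^ 2 * ‖A k k‖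
          = ‖(1:ℂ)‖ - ‖(ω ^ 2 : ℂ) * A k k‖ := by
            simp [norm_mul, norm_pow, abs_of_pos hω]
        _ ≤ ‖(1:ℂ) - (ω ^ 2 : ℂ) * A k k‖ := norm_sub_norm_le _ _
    rw [h1, h2]
    have := hrow k
    linarith
  have hBunit : IsUnit B.det := Ne.isUnit hBdet
  set Y := (B⁻¹).mulVec Ui with hY
  have hEq : B.mulVec Y = Ui := by
    rw [hY, Matrix.mulVec_mulVec, Matrix.mul_nonsing_inv B hBunit, Matrix.one_mulVec]
  have hcomp : ∀ k, Y k - (ω ^ 2 : ℂ) * (A.mulVec Y k) = Ui k := by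
    intro k
    have := congrFun hEq k
    rwa [hB, Matrix.sub_mulVec, Matrix.one_mulVec, Matrix.smul_mulVec,
      Pi.sub_apply, Pi.smul_apply, smul_eq_mul] at this
  -- max of |Y|
  obtain ⟨k₀, -, hk₀⟩ := Finset.exists_max_image (Finset.univ : Finset (Fin m))
    (fun j => ‖Y j‖) ⟨⟨0, by omega⟩, Finset.mem_univ _⟩
  set M := ‖Y k₀‖ with hM
  have hMle : ∀ j, ‖Y j‖ ≤ M := fun j => hk₀ j (Finset.mem_univ j)
  have hM0 : 0 ≤ M := norm_nonneg _
  have hAY : ∀ k, ‖(ω ^ 2 : ℂ) * A.mulVec Y k‖ ≤ a * M := by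
    intro k
    rw [norm_mul]
    have h1 : ‖(ω ^ 2 : ℂ)‖ = ω ^ 2 := by
      simp [norm_pow, abs_of_pos hω]
    have h2 : ‖A.mulVec Y k‖ ≤ (∑ j, ‖A k j‖) * M := by
      rw [Matrix.mulVec, dotProduct, Finset.sum_mul]
      refine le_trans (norm_sum_le _ _) ?_
      exact Finset.sum_le_sum fun j _ => by
        rw [norm_mul]
        exact mul_le_mul_of_nonneg_left (hMle j) (norm_nonneg _)
    rw [h1]
    calc ω ^ 2 * ‖A.mulVec Y k‖
        ≤ ω ^ 2 * ((∑ j, ‖A k j‖) * M) :=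
          mul_le_mul_of_nonneg_left h2 hω2.le
      _ = (ω ^ 2 * ∑ j, ‖A k j‖) * M := by ring
      _ ≤ a * M := mul_le_mul_of_nonneg_right (hrow k) hM0
  -- M ≤ 1/(1-a)
  have hMbound : M ≤ 1 / (1 - a) := by
    have e := hcomp k₀
    have : M ≤ 1 + a * M := by
      calc M = ‖(Y k₀ - (ω ^ 2 : ℂ) * A.mulVec Y k₀)
            + (ω ^ 2 : ℂ) * A.mulVec Y k₀‖ := by rw [hM]; ring_nf
        _ ≤ ‖Y k₀ - (ω ^ 2 : ℂ) * A.mulVec Y k₀‖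
            + ‖(ω ^ 2 : ℂ) * A.mulVec Y k₀‖ := norm_add_le _ _
        _ ≤ 1 + a * M := by rw [e, hUi k₀]; exact add_le_add_right (hAY k₀) 1
    rw [le_div_iff₀ h1a]
    nlinarith
  -- |Y j| ≥ b₀ for all j
  have hYlow : ∀ j, b₀ ≤ ‖Y j‖ := by
    intro j
    have e := hcomp j
    have h1 : (1:ℝ) ≤ ‖Y j‖ + a * M := by
      calc (1:ℝ) = ‖Ui j‖ := (hUi j).symm
        _ = ‖Y j - (ω ^ 2 : ℂ) * A.mulVec Y j‖ := by rw [e]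
        _ ≤ ‖Y j‖ + ‖(ω ^ 2 : ℂ) * A.mulVec Y j‖ := by
            rw [sub_eq_add_neg]
            exact (norm_add_le _ _).trans_eq (by rw [norm_neg])
        _ ≤ ‖Y j‖ + a * M := add_le_add_right (hAY j) _
    have h2 : a * M ≤ a / (1 - a) := by
      rw [div_eq_mul_inv]
      calc a * M ≤ a * (1 / (1 - a)) := mul_le_mul_of_nonneg_left hMbound ha0
        _ = a * (1 - a)⁻¹ := by rw [one_div]
    have : b₀ = 1 - a / (1 - a) := by
      rw [hb₀, eq_sub_iff_add_eq, ← add_div, div_eq_one_iff_eq h1a.ne']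
      ring
    linarith
  -- d := diagInvNorm v
  set d := diagInvNorm v with hd
  have hdBdd : BddAbove ((fun j => (‖v j‖)⁻¹) '' {j | v j ≠ 0}) :=
    Set.Finite.bddAbove ((Set.toFinite _).image _)
  have hdle : ∀ j, v j ≠ 0 → (‖v j‖)⁻¹ ≤ d := fun j hj =>
    le_csSup hdBdd ⟨j, hj, rfl⟩
  obtain ⟨j₀, hj₀⟩ := hv
  have hdpos : 0 < d := lt_of_lt_of_le (by
    have : 0 < ‖v j₀‖ := by
      simpa [norm_pos_iff] using hj₀
    positivity) (hdle j₀ hj₀)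
  have hXj : ∀ j, X j = v j * Y j := by
    intro j; rw [hX, Matrix.mulVec_diagonal]
  -- main lower bound
  have main : ∀ j, v j ≠ 0 → b₀ / d ≤ ‖X j‖ := by
    intro j hj
    have hvpos : 0 < ‖v j‖ := by simpa [norm_pos_iff] using hj
    have h1 : d⁻¹ ≤ ‖v j‖ := by
      rw [← inv_inv (‖v j‖)]
      exact inv_anti₀ (by positivity) (hdle j hj)
    calc b₀ / d = b₀ * d⁻¹ := div_eq_mul_inv _ _
      _ ≤ ‖v j‖ * ‖Y j‖ := by
          have := hYlow j
          nlinarith [inv_pos.2 hdpos]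
      _ = ‖X j‖ := by rw [hXj j, norm_mul]
  refine ⟨main, ?_⟩
  intro Xh h1 h2 h3
  refine Set.Subset.antisymm h2 ?_
  intro j hj
  simp only [Set.mem_setOf_eq] at hj ⊢
  intro hXh0
  have hvj : v j ≠ 0 := by
    intro hv0
    exact hj (by rw [hXj j, hv0, zero_mul])
  have hlow : b₀ / d ≤ ‖X j‖ := main j hvj
  have hcd : c * ε < b₀ / d := by
    rw [gt_iff_lt] at h3
    rw [lt_div_iff₀ hdpos]
    linarith [h3]
  have hup : ‖X j‖ ≤ c * ε := by
    have := supNorm_comp_le (Xh - X) j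
    rw [Pi.sub_apply, hXh0, zero_sub, norm_neg] at this
    linarith
  linarith
end

section
/- Let N ≥ 2 and m ≥ 1, and let Φ be an N×m complex matrix all of whose entries have modulus 1. Suppose that for every pair of distinct row indices k ≠ k', (1/m)|Σ_{l=1}^m Φ_{kl} conj(Φ_{k'l})| < 1/(N−1). Then ‖(1/m)ΦΦ* − I_N‖₂ < 1, where ‖·‖₂ is the spectral norm; consequently, Φ has full rank N and ‖Φ‖₂² < 2m. -/
/-- The spectral norm (largest singular value) of a rectangular complex matrix,
as the operator norm of the induced map between Euclidean spaces. -/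
noncomputable def specNorm {a b : ℕ} (M : Matrix (Fin a) (Fin b) ℂ) : ℝ :=
  ‖LinearMap.toContinuousLinearMap (Matrix.toEuclideanLin M)‖

open scoped Matrix.Norms.L2Operator

lemma specNorm_eq_l2_opNorm {a b : ℕ} (M : Matrix (Fin a) (Fin b) ℂ) : specNorm M = ‖M‖ := rfl

open Finset in
lemma schur_bound {n : ℕ} (A : Matrix (Fin n) (Fin n) ℂ) (K : ℝ) (hK : 0 ≤ K)
    (hrow : ∀ i, ∑ j, ‖A i j‖ ≤ K)
    (hcol : ∀ j, ∑ i, ‖A i j‖ ≤ K) :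
    ‖A‖ ≤ K := by
  rw [Matrix.l2_opNorm_def]
  refine ContinuousLinearMap.opNorm_le_bound _ hK fun x => ?_
  have hx : ∀ m (y : EuclideanSpace ℂ (Fin m)), ‖y‖ = Real.sqrt (∑ i, ‖y i‖ ^ 2) := by
    intro m y; rw [EuclideanSpace.norm_eq]
  have key : ∑ i, ‖(Matrix.toEuclideanLin A x) i‖ ^ 2
      ≤ K ^ 2 * ∑ j, ‖x j‖ ^ 2 := by
    have happ : ∀ i, (Matrix.toEuclideanLin A x) i = ∑ j, A i j * x j := by
      intro i
      simp [Matrix.toEuclideanLin_apply, Matrix.mulVec, dotProduct]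
    have h1 : ∀ i, ‖(Matrix.toEuclideanLin A x) i‖ ^ 2
        ≤ K * ∑ j, ‖A i j‖ * ‖x j‖ ^ 2 := by
      intro i
      rw [happ i]
      have htri : ‖∑ j, A i j * x j‖ ≤ ∑ j, ‖A i j‖ * ‖x j‖ :=
        (norm_sum_le _ _).trans_eq (Finset.sum_congr rfl fun j _ => norm_mul _ _)
      have hcs : (∑ j, ‖A i j‖ * ‖x j‖) ^ 2
          ≤ (∑ j, ‖A i j‖) * ∑ j, ‖A i j‖ * ‖x j‖ ^ 2 :=
        Finset.sum_sq_le_sum_mul_sum_of_sq_eq_mul Finset.univ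
          (fun j _ => norm_nonneg _) (fun j _ => by positivity) (fun j _ => by ring)
      calc ‖∑ j, A i j * x j‖ ^ 2
          ≤ (∑ j, ‖A i j‖ * ‖x j‖) ^ 2 :=
            pow_le_pow_left₀ (norm_nonneg _) htri 2
        _ ≤ (∑ j, ‖A i j‖) * ∑ j, ‖A i j‖ * ‖x j‖ ^ 2 := hcs
        _ ≤ K * ∑ j, ‖A i j‖ * ‖x j‖ ^ 2 := by
            apply mul_le_mul_of_nonneg_right (hrow i)
            positivity
    calc ∑ i, ‖(Matrix.toEuclideanLin A x) i‖ ^ 2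
        ≤ ∑ i, K * ∑ j, ‖A i j‖ * ‖x j‖ ^ 2 :=
          Finset.sum_le_sum fun i _ => h1 i
      _ = K * ∑ j, (∑ i, ‖A i j‖) * ‖x j‖ ^ 2 := by
          rw [← Finset.mul_sum, Finset.sum_comm]
          simp_rw [Finset.sum_mul]
      _ ≤ K * ∑ j, K * ‖x j‖ ^ 2 := by
          apply mul_le_mul_of_nonneg_left _ hK
          exact Finset.sum_le_sum fun j _ => mul_le_mul_of_nonneg_right (hcol j) (by positivity)
      _ = K ^ 2 * ∑ j, ‖x j‖ ^ 2 := by rw [← Finset.mul_sum]; ring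
  have hrfl : ‖(Matrix.toEuclideanLin.trans LinearMap.toContinuousLinearMap A) x‖
      = ‖Matrix.toEuclideanLin A x‖ := rfl
  rw [hrfl, hx, hx]
  rw [show K * Real.sqrt (∑ i, ‖x i‖ ^ 2)
      = Real.sqrt (K ^ 2 * ∑ i, ‖x i‖ ^ 2) by
    rw [Real.sqrt_mul (by positivity), Real.sqrt_sq hK]]
  exact Real.sqrt_le_sqrt key

/-- deterministic core of the paper's spectral-norm bound,
Theorem 2.3.  If `Φ` is `N×m` with unit-modulus entries (`N ≥ 2`, `m ≥ 1`) and
`(1/m)|Σ_l Φ_{kl} conj(Φ_{k'l})| < 1/(N−1)` for all distinct rows `k ≠ k'`, then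
`‖(1/m)ΦΦ* − I‖₂ < 1`; consequently `Φ` has full rank `N` and `‖Φ‖₂² < 2m`. -/
theorem stmt_10 (N m : ℕ) (hN : 2 ≤ N) (hm : 1 ≤ m)
    (Φ : Matrix (Fin N) (Fin m) ℂ) (hΦ : ∀ k l, ‖Φ k l‖ = 1)
    (hrows : ∀ k k' : Fin N, k ≠ k' →
      ‖∑ l, Φ k l * (starRingEnd ℂ) (Φ k' l)‖ / m < 1 / ((N : ℝ) - 1)) :
    specNorm (((m : ℂ))⁻¹ • (Φ * Φ.conjTranspose) - 1) < 1 ∧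
    Φ.rank = N ∧
    specNorm Φ ^ 2 < 2 * m := by
  have hmC : (m : ℂ) ≠ 0 := Nat.cast_ne_zero.mpr (by omega)
  have hN1 : (0:ℝ) < (N:ℝ) - 1 := by
    have : (2:ℝ) ≤ N := by exact_mod_cast hN
    linarith
  set A : Matrix (Fin N) (Fin N) ℂ := ((m : ℂ))⁻¹ • (Φ * Φ.conjTranspose) - 1 with hA
  -- entries of A
  have hentry : ∀ k k', A k k' =
      (m : ℂ)⁻¹ * (∑ l, Φ k l * (starRingEnd ℂ) (Φ k' l)) - if k = k' then 1 else 0 := by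
    intro k k'
    simp [hA, Matrix.sub_apply, Matrix.smul_apply, Matrix.mul_apply,
      Matrix.conjTranspose_apply, Matrix.one_apply, smul_eq_mul, Complex.star_def]
  have hdiag : ∀ k, A k k = 0 := by
    intro k
    rw [hentry k k, if_pos rfl]
    have : ∀ l, Φ k l * (starRingEnd ℂ) (Φ k l) = 1 := by
      intro l
      rw [Complex.mul_conj]
      norm_cast
      rw [← Complex.sq_norm, hΦ, one_pow]
    rw [Finset.sum_congr rfl fun l _ => this l]
    simp [inv_mul_cancel₀ hmC]
  have hoff : ∀ k k', k ≠ k' → ‖A k k'‖ < 1 / ((N:ℝ) - 1) := by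
    intro k k' hkk
    rw [hentry k k', if_neg hkk, sub_zero, norm_mul, norm_inv, Complex.norm_natCast]
    rw [inv_mul_eq_div]
    exact hrows k k' hkk
  -- row sums
  have hrowsum : ∀ k, ∑ k', ‖A k k'‖ < 1 := by
    intro k
    have hk : k ∈ Finset.univ := Finset.mem_univ k
    rw [← Finset.add_sum_erase _ _ hk, hdiag k, norm_zero, zero_add]
    have hcard : (Finset.univ.erase k).card = N - 1 := by
      rw [Finset.card_erase_of_mem hk, Finset.card_univ, Fintype.card_fin]
    have hne : (Finset.univ.erase k).Nonempty := by
      rw [← Finset.card_pos, hcard]; omega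
    calc ∑ k' ∈ Finset.univ.erase k, ‖A k k'‖
        < ∑ _k' ∈ Finset.univ.erase k, (1 / ((N:ℝ) - 1)) := by
          refine Finset.sum_lt_sum_of_nonempty hne fun k' hk' => ?_
          exact hoff k k' (Finset.ne_of_mem_erase hk').symm
      _ = 1 := by
          rw [Finset.sum_const, hcard, nsmul_eq_mul]
          have : ((N - 1 : ℕ) : ℝ) = (N:ℝ) - 1 := by
            have : (1:ℕ) ≤ N := by omega
            push_cast [Nat.cast_sub this]; ring
          rw [this, mul_one_div, div_self (ne_of_gt hN1)]
  -- column sums equal row sums (A is "abs-symmetric")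
  have habs : ∀ k k', ‖A k k'‖ = ‖A k' k‖ := by
    intro k k'
    rcases eq_or_ne k k' with rfl | h
    · rfl
    · rw [hentry k k', hentry k' k, if_neg h, if_neg (Ne.symm h), sub_zero, sub_zero,
        norm_mul, norm_mul]
      congr 1
      rw [← Complex.norm_conj (∑ l, Φ k' l * (starRingEnd ℂ) (Φ k l))]
      congr 1
      rw [map_sum]
      refine Finset.sum_congr rfl fun l _ => ?_
      rw [map_mul, Complex.conj_conj]
      ring
  have hcolsum : ∀ k', ∑ k, ‖A k k'‖ < 1 := by
    intro k'
    calc ∑ k, ‖A k k'‖ = ∑ k, ‖A k' k‖ :=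
          Finset.sum_congr rfl fun k _ => habs k k'
      _ < 1 := hrowsum k'
  -- uniform bound K
  have hNe : (Finset.univ : Finset (Fin N)).Nonempty := by
    rw [← Finset.card_pos, Finset.card_univ, Fintype.card_fin]; omega
  set K : ℝ := Finset.univ.sup' hNe (fun k => ∑ k', ‖A k k'‖) with hKdef
  have hKlt : K < 1 := (Finset.sup'_lt_iff hNe).mpr fun k _ => hrowsum k
  have hKrow : ∀ k, ∑ k', ‖A k k'‖ ≤ K := fun k =>
    Finset.le_sup' (fun k => ∑ k', ‖A k k'‖) (Finset.mem_univ k)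
  have hK0 : 0 ≤ K := by
    obtain ⟨k0, _⟩ := hNe
    exact le_trans (Finset.sum_nonneg fun _ _ => norm_nonneg _) (hKrow k0)
  have hKcol : ∀ k', ∑ k, ‖A k k'‖ ≤ K := by
    intro k'
    calc ∑ k, ‖A k k'‖ = ∑ k, ‖A k' k‖ :=
          Finset.sum_congr rfl fun k _ => habs k k'
      _ ≤ K := hKrow k'
  have hnormA : ‖A‖ < 1 := lt_of_le_of_lt (schur_bound A K hK0 hKrow hKcol) hKlt
  have part1 : specNorm A < 1 := by rw [specNorm_eq_l2_opNorm]; exact hnormA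
  -- invertibility of B = m⁻¹ • Φ Φᴴ
  set B : Matrix (Fin N) (Fin N) ℂ := ((m : ℂ))⁻¹ • (Φ * Φ.conjTranspose) with hB
  have hBA : B = 1 + A := by rw [hA]; abel
  have hunitB : IsUnit B := by
    have h1 : ‖-A‖ < 1 := by rwa [norm_neg]
    have h2 := (Units.oneSub (-A) h1).isUnit
    rwa [Units.val_oneSub, sub_neg_eq_add, ← hBA] at h2
  have hunitΦΦ : IsUnit (Φ * Φ.conjTranspose) := by
    rw [Matrix.isUnit_iff_isUnit_det]
    have hdetB := (Matrix.isUnit_iff_isUnit_det B).mp hunitB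
    rw [hB, Matrix.det_smul] at hdetB
    rw [isUnit_iff_ne_zero] at hdetB ⊢
    intro h
    rw [h, mul_zero] at hdetB
    exact hdetB rfl
  have part2 : Φ.rank = N := by
    have h1 : (Φ * Φ.conjTranspose).rank = N := by
      rw [Matrix.rank_of_isUnit _ hunitΦΦ, Fintype.card_fin]
    have h2 : (Φ * Φ.conjTranspose).rank ≤ Φ.rank := Matrix.rank_mul_le_left _ _
    have h3 : Φ.rank ≤ N := by
      have := Matrix.rank_le_card_height Φ
      rwa [Fintype.card_fin] at this
    omega
  -- norm bound
  haveI : NeZero N := ⟨by omega⟩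
  have part3 : specNorm Φ ^ 2 < 2 * m := by
    rw [specNorm_eq_l2_opNorm, sq]
    have h1 : ‖Φ‖ * ‖Φ‖ = ‖Φ * Φ.conjTranspose‖ := by
      rw [← Matrix.l2_opNorm_conjTranspose Φ, ← Matrix.l2_opNorm_conjTranspose_mul_self
        Φ.conjTranspose, Matrix.conjTranspose_conjTranspose]
    have h2 : Φ * Φ.conjTranspose = (m : ℂ) • B := by
      rw [hB, smul_smul, mul_inv_cancel₀ hmC, one_smul]
    have h3 : ‖Φ * Φ.conjTranspose‖ = (m:ℝ) * ‖B‖ := by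
      rw [h2, norm_smul, Complex.norm_natCast]
    have h4 : ‖B‖ < 2 := by
      calc ‖B‖ = ‖(1 : Matrix (Fin N) (Fin N) ℂ) + A‖ := by rw [hBA]
        _ ≤ ‖(1 : Matrix (Fin N) (Fin N) ℂ)‖ + ‖A‖ := norm_add_le _ _
        _ = 1 + ‖A‖ := by rw [CStarRing.norm_one]
        _ < 2 := by linarith
    rw [h1, h3]
    have hm' : (0:ℝ) < m := by exact_mod_cast hm
    calc (m:ℝ) * ‖B‖ < (m:ℝ) * 2 := by exact mul_lt_mul_of_pos_left h4 hm'
      _ = 2 * m := by ring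
  exact ⟨part1, part2, part3⟩
end

section
/- There exists a constant c > 0 such that for every continuously differentiable 2π-periodic function f: ℝ → ℂ, every θ₀ ∈ ℝ, and every λ ≥ 0, |∫_{−π/2}^{π/2} f(θ + θ₀) cos θ · e^{iλ sin θ} dθ| ≤ c (1 + λ)^{−1} (‖f‖_∞ + ‖f'‖_∞). -/
open Function intervalIntegral Complex

lemma bdd_of_periodic_cont {f : ℝ → ℂ} (hf : Continuous f)
    (hp : Periodic f (2 * Real.pi)) :
    BddAbove (Set.range fun x => norm (f x)) := by
  have h := hp.isBounded_of_continuous (by positivity) hf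
  obtain ⟨C, hC⟩ := isBounded_iff_forall_norm_le.1 h
  exact ⟨C, by rintro y ⟨x, rfl⟩; exact hC _ (Set.mem_range_self x)⟩

/-- integration-by-parts estimate for the 3D coherence bound.
There is `c > 0` such that for every `C¹` `2π`-periodic `f : ℝ → ℂ`, every `θ₀ ∈ ℝ`
and every `λ ≥ 0`,
`|∫_{−π/2}^{π/2} f(θ+θ₀) cos θ e^{iλ sin θ} dθ| ≤ c(1+λ)⁻¹(‖f‖_∞ + ‖f'‖_∞)`. -/
theorem stmt_15 :
    ∃ c : ℝ, 0 < c ∧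
      ∀ f : ℝ → ℂ, ContDiff ℝ 1 f → Function.Periodic f (2 * Real.pi) →
        ∀ θ₀ lam : ℝ, 0 ≤ lam →
          norm (∫ θ in (-(Real.pi / 2))..(Real.pi / 2),
              f (θ + θ₀) * ((Real.cos θ : ℝ) : ℂ) *
                Complex.exp (Complex.I * (lam : ℂ) * ((Real.sin θ : ℝ) : ℂ))) ≤
            c * (1 + lam)⁻¹ *
              ((⨆ x, norm (f x)) + ⨆ x, norm (deriv f x)) := by
  have hπ := Real.pi_pos
  refine ⟨2 * Real.pi + 4, by positivity, ?_⟩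
  intro f hf hper θ₀ lam hlam
  have hfc : Continuous f := hf.continuous
  have hfd : Differentiable ℝ f := hf.differentiable one_ne_zero
  have hdc : Continuous (deriv f) := hf.continuous_deriv le_rfl
  have hperd : Periodic (deriv f) (2 * Real.pi) := by
    intro x
    have : deriv (fun y => f (y + 2 * Real.pi)) x = deriv f (x + 2 * Real.pi) :=
      deriv_comp_add_const f _ x
    rw [← this]
    congr 1
    funext y
    exact hper y
  set M : ℝ := ⨆ x, norm (f x) with hMdef
  set M' : ℝ := ⨆ x, norm (deriv f x) with hM'def
  have hbdd := bdd_of_periodic_cont hfc hper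
  have hbdd' := bdd_of_periodic_cont hdc hperd
  have hM : ∀ x, norm (f x) ≤ M := fun x => le_ciSup hbdd x
  have hM' : ∀ x, norm (deriv f x) ≤ M' := fun x => le_ciSup hbdd' x
  have hMnn : 0 ≤ M := (norm_nonneg _).trans (hM 0)
  have hM'nn : 0 ≤ M' := (norm_nonneg _).trans (hM' 0)
  have habs_exp : ∀ θ : ℝ,
      norm (Complex.exp (Complex.I * lam * Real.sin θ)) = 1 := by
    intro θ
    rw [Complex.norm_exp]
    simp [Complex.mul_re]
  have hlen : |Real.pi / 2 - -(Real.pi / 2)| = Real.pi := by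
    rw [show Real.pi / 2 - -(Real.pi / 2) = Real.pi by ring]
    exact _root_.abs_of_nonneg hπ.le
  -- integrand norm bound
  have hnorm : ∀ θ : ℝ,
      ‖f (θ + θ₀) * ((Real.cos θ : ℝ) : ℂ) *
        Complex.exp (Complex.I * lam * Real.sin θ)‖ ≤ M := by
    intro θ
    rw [norm_mul, norm_mul]
    have h1 : ‖f (θ + θ₀)‖ ≤ M := hM _
    have h2 : ‖((Real.cos θ : ℝ) : ℂ)‖ ≤ 1 := by
      rw [Complex.norm_real, Real.norm_eq_abs]
      exact Real.abs_cos_le_one θ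
    have h3 : ‖Complex.exp (Complex.I * lam * Real.sin θ)‖ = 1 := habs_exp θ
    rw [h3, mul_one]
    calc ‖f (θ + θ₀)‖ * ‖((Real.cos θ : ℝ) : ℂ)‖ ≤ M * 1 :=
          mul_le_mul h1 h2 (norm_nonneg _) hMnn
      _ = M := mul_one M
  by_cases hl : lam ≤ 1
  · -- trivial bound
    have htriv : norm (∫ θ in (-(Real.pi / 2))..(Real.pi / 2),
        f (θ + θ₀) * ((Real.cos θ : ℝ) : ℂ) *
          Complex.exp (Complex.I * lam * Real.sin θ)) ≤ M * Real.pi := by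
      calc ‖∫ θ in (-(Real.pi / 2))..(Real.pi / 2),
            f (θ + θ₀) * ((Real.cos θ : ℝ) : ℂ) *
              Complex.exp (Complex.I * lam * Real.sin θ)‖
          ≤ M * |Real.pi / 2 - -(Real.pi / 2)| :=
            intervalIntegral.norm_integral_le_of_norm_le_const fun θ _ => hnorm θ
        _ = M * Real.pi := by rw [hlen]
    have e1 : (2 : ℝ)⁻¹ ≤ (1 + lam)⁻¹ :=
      inv_anti₀ (by positivity) (by linarith)
    have e2 : (2 * Real.pi + 4) * (2 : ℝ)⁻¹ * (M + M') ≤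
        (2 * Real.pi + 4) * (1 + lam)⁻¹ * (M + M') := by
      apply mul_le_mul_of_nonneg_right _ (by linarith)
      apply mul_le_mul_of_nonneg_left e1 (by positivity)
    refine htriv.trans (le_trans ?_ e2)
    nlinarith
  · -- integration by parts
    push_neg at hl
    have hlam0 : (0 : ℝ) < lam := by linarith
    have hilam : (Complex.I * lam) ≠ 0 := by
      simp [Complex.I_ne_zero, Complex.ofReal_ne_zero, ne_of_gt hlam0]
    set u : ℝ → ℂ := fun θ => f (θ + θ₀) with hu_def
    set u' : ℝ → ℂ := fun θ => deriv f (θ + θ₀) with hu'_def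
    set v : ℝ → ℂ := fun θ =>
      (Complex.I * lam)⁻¹ * Complex.exp (Complex.I * lam * Real.sin θ) with hv_def
    set v' : ℝ → ℂ := fun θ =>
      ((Real.cos θ : ℝ) : ℂ) * Complex.exp (Complex.I * lam * Real.sin θ) with hv'_def
    have hu : ∀ θ ∈ Set.uIcc (-(Real.pi / 2)) (Real.pi / 2), HasDerivAt u (u' θ) θ := by
      intro θ _
      exact HasDerivAt.comp_add_const θ θ₀ ((hfd (θ + θ₀)).hasDerivAt)
    have hv : ∀ θ ∈ Set.uIcc (-(Real.pi / 2)) (Real.pi / 2), HasDerivAt v (v' θ) θ := by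
      intro θ _
      have hsin : HasDerivAt (fun t : ℝ => ((Real.sin t : ℝ) : ℂ)) (Real.cos θ) θ :=
        (Real.hasDerivAt_sin θ).ofReal_comp
      have hinner : HasDerivAt (fun t : ℝ => Complex.I * lam * ((Real.sin t : ℝ) : ℂ))
          (Complex.I * lam * Real.cos θ) θ := hsin.const_mul _
      have hexp := hinner.cexp
      have := hexp.const_mul ((Complex.I * (lam : ℂ))⁻¹)
      have e : v' θ = (Complex.I * (lam : ℂ))⁻¹ * (Complex.exp (Complex.I * lam * Real.sin θ) *
          (Complex.I * lam * Real.cos θ)) := by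
        rw [mul_comm (Complex.exp _), ← mul_assoc, ← mul_assoc, inv_mul_cancel₀ hilam, one_mul]
      rw [e]
      exact this
    have hu'int : IntervalIntegrable u' MeasureTheory.volume
        (-(Real.pi / 2)) (Real.pi / 2) :=
      ((hdc.comp (continuous_id.add continuous_const))).intervalIntegrable _ _
    have hexpc : Continuous fun θ : ℝ => Complex.exp (Complex.I * lam * Real.sin θ) :=
      Complex.continuous_exp.comp
        (continuous_const.mul (Complex.continuous_ofReal.comp Real.continuous_sin))
    have hv'cont : Continuous v' :=
      (Complex.continuous_ofReal.comp Real.continuous_cos).mul hexpc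
    have hv'int : IntervalIntegrable v' MeasureTheory.volume
        (-(Real.pi / 2)) (Real.pi / 2) := hv'cont.intervalIntegrable _ _
    have hibp := intervalIntegral.integral_mul_deriv_eq_deriv_mul hu hv hu'int hv'int
    have hInt : (∫ θ in (-(Real.pi / 2))..(Real.pi / 2),
        f (θ + θ₀) * ((Real.cos θ : ℝ) : ℂ) *
          Complex.exp (Complex.I * lam * Real.sin θ)) =
        ∫ θ in (-(Real.pi / 2))..(Real.pi / 2), u θ * v' θ := by
      congr 1
      funext θ
      simp only [hu_def, hv'_def]
      ring
    have habsv : ∀ θ : ℝ, norm (v θ) = lam⁻¹ := by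
      intro θ
      simp only [hv_def]
      rw [norm_mul, norm_inv, norm_mul, habs_exp, mul_one]
      simp [Complex.norm_I, abs_of_pos hlam0]
    -- bound boundary terms
    have hbdry : ∀ θ : ℝ, norm (u θ * v θ) ≤ M * lam⁻¹ := by
      intro θ
      rw [norm_mul, habsv]
      exact mul_le_mul_of_nonneg_right (hM _) (by positivity)
    -- bound remaining integral
    have hrem : norm (∫ θ in (-(Real.pi / 2))..(Real.pi / 2), u' θ * v θ) ≤
        M' * lam⁻¹ * Real.pi := by
      have hb : ∀ θ ∈ Set.uIoc (-(Real.pi / 2)) (Real.pi / 2), ‖u' θ * v θ‖ ≤ M' * lam⁻¹ := by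
        intro θ _
        rw [norm_mul]
        have hv1 : ‖v θ‖ = lam⁻¹ := habsv θ
        rw [hv1]
        exact mul_le_mul_of_nonneg_right (hM' _) (by positivity)
      calc ‖∫ θ in (-(Real.pi / 2))..(Real.pi / 2), u' θ * v θ‖
          ≤ M' * lam⁻¹ * |Real.pi / 2 - -(Real.pi / 2)| :=
            intervalIntegral.norm_integral_le_of_norm_le_const hb
        _ = M' * lam⁻¹ * Real.pi := by rw [hlen]
    have hmain : norm (∫ θ in (-(Real.pi / 2))..(Real.pi / 2),
        f (θ + θ₀) * ((Real.cos θ : ℝ) : ℂ) *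
          Complex.exp (Complex.I * lam * Real.sin θ)) ≤
        M * lam⁻¹ + M * lam⁻¹ + M' * lam⁻¹ * Real.pi := by
      rw [hInt, hibp]
      calc norm (u (Real.pi / 2) * v (Real.pi / 2)
              - u (-(Real.pi / 2)) * v (-(Real.pi / 2))
              - ∫ θ in (-(Real.pi / 2))..(Real.pi / 2), u' θ * v θ)
          ≤ norm (u (Real.pi / 2) * v (Real.pi / 2)
              - u (-(Real.pi / 2)) * v (-(Real.pi / 2)))
            + norm (∫ θ in (-(Real.pi / 2))..(Real.pi / 2), u' θ * v θ) :=
            norm_sub_le _ _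
        _ ≤ (norm (u (Real.pi / 2) * v (Real.pi / 2))
              + norm (u (-(Real.pi / 2)) * v (-(Real.pi / 2))))
            + norm (∫ θ in (-(Real.pi / 2))..(Real.pi / 2), u' θ * v θ) := by
            gcongr
            exact norm_sub_le _ _
        _ ≤ (M * lam⁻¹ + M * lam⁻¹) + M' * lam⁻¹ * Real.pi := by
            gcongr <;> first | exact hbdry _ | exact hrem
        _ = M * lam⁻¹ + M * lam⁻¹ + M' * lam⁻¹ * Real.pi := by ring
    refine hmain.trans ?_
    have e1 : (2 * lam)⁻¹ ≤ (1 + lam)⁻¹ :=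
      inv_anti₀ (by positivity) (by linarith)
    have hrpos : (0 : ℝ) < lam⁻¹ := by positivity
    have e2 : (2 * Real.pi + 4) * (2 * lam)⁻¹ * (M + M') ≤
        (2 * Real.pi + 4) * (1 + lam)⁻¹ * (M + M') := by
      apply mul_le_mul_of_nonneg_right _ (by linarith)
      apply mul_le_mul_of_nonneg_left e1 (by positivity)
    refine le_trans ?_ e2
    have h2l : (2 * lam)⁻¹ = 2⁻¹ * lam⁻¹ := by rw [mul_inv]
    rw [h2l]
    nlinarith [mul_nonneg hMnn hrpos.le, mul_nonneg hM'nn hrpos.le, hπ,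
      mul_nonneg (mul_nonneg hMnn hrpos.le) hπ.le,
      mul_nonneg (mul_nonneg hM'nn hrpos.le) hπ.le]
end

section
/- Let ω > 0, d ∈ {2,3}, let r₁,…,r_s ∈ ℝ^d, let ν₁,…,ν_s ∈ ℂ, let V = diag(ν₁,…,ν_s), and let G be a symmetric s×s complex matrix (G_{jk} = G_{kj}) with zero diagonal. Assume I − ω²GV is invertible. For a unit vector e ∈ ℝ^d define the vector E(e) ∈ ℂ^s by E(e)_j := exp(iω e·r_j), the exciting field u(e) := (I − ω²GV)⁻¹E(e), and the scattering amplitude A(r̂, d̂) := (ω²/(4π)) Σ_{j=1}^s ν_j u(d̂)_j exp(−iω r̂·r_j) for unit vectors r̂ (sampling direction) and d̂ (incidence direction). Then A(r̂, d̂) = A(−d̂, −r̂) for all unit vectors r̂ and d̂. -/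
open Matrix


/-- input–output reciprocity of point-scatterer scattering.
For a symmetric Green matrix `G` with zero diagonal, diagonal strength matrix `V`,
invertible `I − ω²GV`, plane-wave exciting fields `u(e) = (I−ω²GV)⁻¹E(e)` with
`E(e)ⱼ = e^{iω e·rⱼ}`, the scattering amplitude
`A(r̂,d̂) = (ω²/4π) Σⱼ νⱼ u(d̂)ⱼ e^{−iω r̂·rⱼ}` satisfies `A(r̂,d̂) = A(−d̂,−r̂)`. -/
theorem stmt_17 (s : ℕ) (d : ℕ) (hd : d = 2 ∨ d = 3) (ω : ℝ) (hω : 0 < ω)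
    (r : Fin s → EuclideanSpace ℝ (Fin d))
    (ν : Fin s → ℂ)
    (G : Matrix (Fin s) (Fin s) ℂ) (hGsymm : G.IsSymm) (hGdiag : ∀ j, G j j = 0)
    (hinv : IsUnit (1 - (ω ^ 2 : ℂ) • (G * Matrix.diagonal ν)))
    (Ef : EuclideanSpace ℝ (Fin d) → Fin s → ℂ)
    (hEf : ∀ e j, Ef e j = Complex.exp (Complex.I * (ω : ℂ) * ((inner ℝ e (r j) : ℝ) : ℂ)))
    (u : EuclideanSpace ℝ (Fin d) → Fin s → ℂ)
    (hu : ∀ e, u e = ((1 - (ω ^ 2 : ℂ) • (G * Matrix.diagonal ν))⁻¹).mulVec (Ef e))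
    (A : EuclideanSpace ℝ (Fin d) → EuclideanSpace ℝ (Fin d) → ℂ)
    (hA : ∀ rhat dhat, A rhat dhat = ((ω ^ 2 : ℂ) / (4 * Real.pi)) *
      ∑ j, ν j * u dhat j * Complex.exp (-(Complex.I * (ω : ℂ) * ((inner ℝ rhat (r j) : ℝ) : ℂ)))) :
    ∀ rhat dhat : EuclideanSpace ℝ (Fin d), ‖rhat‖ = 1 → ‖dhat‖ = 1 →
      A rhat dhat = A (-dhat) (-rhat) := by
  intro rhat dhat _ _
  set M : Matrix (Fin s) (Fin s) ℂ := 1 - (ω ^ 2 : ℂ) • (G * Matrix.diagonal ν) with hM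
  have hdet : IsUnit M.det := (Matrix.isUnit_iff_isUnit_det M).mp hinv
  -- Mᵀ * V = V * M
  have hMT : Mᵀ * Matrix.diagonal ν = Matrix.diagonal ν * M := by
    simp only [hM, Matrix.transpose_sub, Matrix.transpose_one, Matrix.transpose_smul,
      Matrix.transpose_mul, Matrix.diagonal_transpose, hGsymm.eq, sub_mul, mul_sub,
      one_mul, mul_one, Matrix.smul_mul, Matrix.mul_smul, Matrix.mul_assoc]
  -- S := V * M⁻¹ is symmetric
  have hS : (Matrix.diagonal ν * M⁻¹)ᵀ = Matrix.diagonal ν * M⁻¹ := by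
    have h1 : (Mᵀ)⁻¹ * (Mᵀ * Matrix.diagonal ν) * M⁻¹ = Matrix.diagonal ν * M⁻¹ := by
      rw [← Matrix.mul_assoc, Matrix.nonsing_inv_mul _ (by rwa [Matrix.det_transpose]),
        Matrix.one_mul]
    calc (Matrix.diagonal ν * M⁻¹)ᵀ
        = (M⁻¹)ᵀ * Matrix.diagonal ν := by
          rw [Matrix.transpose_mul, Matrix.diagonal_transpose]
      _ = (Mᵀ)⁻¹ * Matrix.diagonal ν := by rw [Matrix.transpose_nonsing_inv]
      _ = (Mᵀ)⁻¹ * Matrix.diagonal ν * (M * M⁻¹) := by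
          rw [Matrix.mul_nonsing_inv _ hdet, Matrix.mul_one]
      _ = (Mᵀ)⁻¹ * (Mᵀ * Matrix.diagonal ν) * M⁻¹ := by
          rw [hMT]; noncomm_ring
      _ = Matrix.diagonal ν * M⁻¹ := h1
  -- rewrite A as a symmetric bilinear form
  have hEneg : ∀ (e : EuclideanSpace ℝ (Fin d)) j,
      Ef (-e) j = Complex.exp (-(Complex.I * (ω : ℂ) * ((inner ℝ e (r j) : ℝ) : ℂ))) := by
    intro e j
    rw [hEf]
    congr 1
    have : (inner ℝ (-e) (r j) : ℝ) = -(inner ℝ e (r j) : ℝ) := by simp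
    rw [this]
    push_cast
    ring
  have key : ∀ a b : EuclideanSpace ℝ (Fin d),
      ∑ j, ν j * u b j * Complex.exp (-(Complex.I * (ω : ℂ) * ((inner ℝ a (r j) : ℝ) : ℂ)))
        = dotProduct (Ef (-a)) ((Matrix.diagonal ν * M⁻¹).mulVec (Ef b)) := by
    intro a b
    rw [dotProduct]
    apply Finset.sum_congr rfl
    intro j _
    rw [hEneg, hu, ← Matrix.mulVec_mulVec, Matrix.mulVec_diagonal]
    ring
  have symm : ∀ v w : Fin s → ℂ,
      dotProduct v ((Matrix.diagonal ν * M⁻¹).mulVec w)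
        = dotProduct w ((Matrix.diagonal ν * M⁻¹).mulVec v) := by
    intro v w
    rw [Matrix.dotProduct_mulVec, ← Matrix.mulVec_transpose, hS, dotProduct_comm]
  rw [hA, hA, key, key]
  have : Ef (- -dhat) = Ef dhat := by rw [neg_neg]
  rw [this, symm]
end
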